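/- Fix 0 < σ < 1/2 and set β = log 2 / log(1/σ). For k ∈ ℕ let r_k = σ^k/2, R_k = σ^{k-1}/4, r'_k = (log 4)^{-p} 2^{-k-1} k^{-p} and R'_k = (log 4)^{-p} 2^{-k-1}(k-1)^{-p} (for k ≥ 2), with p > 1/2. Define the radial (sup-norm) stretching ρ_k(x) = (a‖x‖+b) x/‖x‖ on the frame A_k = {x ∈ ℝ² : r_k ≤ ‖x‖ ≤ R_k}, where ‖x‖ = max(|x₁|,|x₂|), a = (R'_k − r'_k)/(R_k − r_k), b = (R_k r'_k − R'_k r_k)/(R_k − r_k). Then there is a constant C = C(σ, p) independent of k such that ‖ρ_k(x) − ρ_k(y)‖ ≤ C ‖x − y‖^β for all x, y ∈ A_k. -/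

import Mathlib

lemma unit_vec_lip {E : Type*} [NormedAddCommGroup E] [NormedSpace ℝ E]
    (x y : E) (hx : x ≠ 0) (hy : y ≠ 0) :
    ‖‖x‖⁻¹ • x - ‖y‖⁻¹ • y‖ ≤ 2 * ‖x - y‖ / ‖x‖ := by
  have hxn : (0:ℝ) < ‖x‖ := norm_pos_iff.mpr hx
  have hyn : (0:ℝ) < ‖y‖ := norm_pos_iff.mpr hy
  have hid : ‖x‖⁻¹ • x - ‖y‖⁻¹ • y = ‖x‖⁻¹ • (x - y) + (‖x‖⁻¹ - ‖y‖⁻¹) • y := by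
    rw [smul_sub, sub_smul]; abel
  have h1 : ‖(‖x‖⁻¹ : ℝ) • (x - y)‖ = ‖x‖⁻¹ * ‖x - y‖ := by
    rw [norm_smul, Real.norm_eq_abs, abs_of_pos (by positivity)]
  have hd : (‖x‖⁻¹ - ‖y‖⁻¹ : ℝ) = (‖y‖ - ‖x‖) / (‖x‖ * ‖y‖) := by
    field_simp
  have h2 : ‖((‖x‖⁻¹ - ‖y‖⁻¹ : ℝ)) • y‖ ≤ ‖x - y‖ / ‖x‖ := by
    rw [norm_smul, Real.norm_eq_abs, hd, abs_div, abs_of_pos (mul_pos hxn hyn)]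
    have habs : |‖y‖ - ‖x‖| ≤ ‖x - y‖ := by
      have := abs_norm_sub_norm_le y x
      rwa [norm_sub_rev] at this
    calc |‖y‖ - ‖x‖| / (‖x‖ * ‖y‖) * ‖y‖ = |‖y‖ - ‖x‖| / ‖x‖ := by
          field_simp
      _ ≤ ‖x - y‖ / ‖x‖ := by gcongr
  calc ‖‖x‖⁻¹ • x - ‖y‖⁻¹ • y‖
      ≤ ‖(‖x‖⁻¹ : ℝ) • (x - y)‖ + ‖((‖x‖⁻¹ - ‖y‖⁻¹ : ℝ)) • y‖ := by
        rw [hid]; exact norm_add_le _ _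
    _ ≤ ‖x‖⁻¹ * ‖x - y‖ + ‖x - y‖ / ‖x‖ := by rw [h1]; linarith [h2]
    _ = 2 * ‖x - y‖ / ‖x‖ := by field_simp; ring

set_option maxHeartbeats 1000000 in
/-- the radial (sup-norm) stretching of the frame
`A_k = {r_k ≤ ‖x‖ ≤ R_k}` onto `A'_k = {r'_k ≤ ‖x‖ ≤ R'_k}` is Hölder continuous
with exponent `β = log 2 / log(1/σ)` and a constant `C(σ,p)` independent of `k`.
Here ℝ × ℝ carries the sup norm `‖x‖ = max(|x₁|,|x₂|)`. -/
theorem radial_stretching_holder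
    (σ p : ℝ) (hσ0 : 0 < σ) (hσ : σ < 1/2) (hp : 1/2 < p) :
    ∃ C : ℝ, 0 < C ∧ ∀ k : ℕ, 2 ≤ k →
      ∀ rk Rk rk' Rk' a b : ℝ,
        rk = σ ^ k / 2 →
        Rk = σ ^ (k - 1) / 4 →
        rk' = (Real.log 4) ^ (-p) * (2:ℝ) ^ (-(k:ℝ) - 1) * (k:ℝ) ^ (-p) →
        Rk' = (Real.log 4) ^ (-p) * (2:ℝ) ^ (-(k:ℝ) - 1) * ((k:ℝ) - 1) ^ (-p) →
        a = (Rk' - rk') / (Rk - rk) →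
        b = (Rk * rk' - Rk' * rk) / (Rk - rk) →
        ∀ x y : ℝ × ℝ,
          rk ≤ ‖x‖ → ‖x‖ ≤ Rk → rk ≤ ‖y‖ → ‖y‖ ≤ Rk →
          ‖((a * ‖x‖ + b) / ‖x‖) • x - ((a * ‖y‖ + b) / ‖y‖) • y‖ ≤
            C * ‖x - y‖ ^ (Real.log 2 / Real.log (1/σ)) := by
  have hσ1 : σ < 1 := by linarith
  have h2σ : (0:ℝ) < 1 - 2*σ := by linarith
  set β := Real.log 2 / Real.log (1/σ) with hβdef
  have hlog1σ : 0 < Real.log (1/σ) := Real.log_pos (by rw [lt_div_iff₀ hσ0]; linarith)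
  have hβpos : 0 < β := div_pos (Real.log_pos one_lt_two) hlog1σ
  have hβlt : β < 1 := by
    rw [hβdef, div_lt_one hlog1σ]
    exact Real.log_lt_log (by norm_num) ((lt_div_iff₀ hσ0).mpr (by linarith))
  have hβlogb : β = Real.logb σ (1/2) := by
    rw [hβdef, Real.logb, one_div, one_div, Real.log_inv, Real.log_inv, div_neg, neg_div]
  have hσβ : σ ^ β = (1/2 : ℝ) := by
    rw [hβlogb]; exact Real.rpow_logb hσ0 hσ1.ne (by norm_num)
  set L := (Real.log 4) ^ (-p) with hLdef
  have hL : 0 < L := Real.rpow_pos_of_pos (Real.log_pos (by norm_num)) _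
  refine ⟨4 * L / (σ * (1 - 2*σ)), by positivity, ?_⟩
  set C := 4 * L / (σ * (1 - 2*σ)) with hCdef
  intro k hk rk Rk rk' Rk' a b hrk hRk hrk' hRk' ha hb x y hx1 hx2 hy1 hy2
  obtain ⟨m, rfl⟩ : ∃ m, k = m + 2 := ⟨k - 2, by omega⟩
  push_cast at hrk' hRk'
  set P := σ ^ (m+1) with hPdef
  have hP : 0 < P := by positivity
  have hrk2 : rk = P * σ / 2 := by rw [hrk, hPdef, ← pow_succ]
  have hRk2 : Rk = P / 4 := by
    rw [hRk, hPdef]; norm_num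
  have hsub : Rk - rk = P * (1 - 2*σ) / 4 := by rw [hrk2, hRk2]; ring
  have hsubpos : 0 < Rk - rk := by rw [hsub]; positivity
  have hrkpos : 0 < rk := by rw [hrk2]; positivity
  have hRkpos : 0 < Rk := by rw [hRk2]; positivity
  have hrkRk : rk ≤ Rk := by
    rw [hrk2, hRk2]
    have := mul_le_mul_of_nonneg_left hσ.le hP.le
    linarith
  -- the target quantities
  set Q := L / 2 ^ (m+3) with hQdef
  have hQ : 0 < Q := by positivity
  have h2pow : (2:ℝ) ^ (-((m:ℝ)+2) - 1) = ((2:ℝ) ^ (m+3))⁻¹ := by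
    rw [show -((m:ℝ)+2) - 1 = -(((m+3:ℕ):ℝ)) by push_cast; ring,
      Real.rpow_neg (by norm_num), Real.rpow_natCast]
  have hrk'2 : rk' = Q * ((m:ℝ)+2) ^ (-p) := by
    rw [hrk', h2pow, hQdef]; ring
  have hRk'2 : Rk' = Q * ((m:ℝ)+1) ^ (-p) := by
    rw [hRk', h2pow, hQdef]; ring_nf
  have hm0 : (0:ℝ) ≤ (m:ℝ) := Nat.cast_nonneg m
  have h1le : ((m:ℝ)+2) ^ (-p) ≤ 1 :=
    Real.rpow_le_one_of_one_le_of_nonpos (by linarith) (by linarith)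
  have h2le : ((m:ℝ)+1) ^ (-p) ≤ 1 :=
    Real.rpow_le_one_of_one_le_of_nonpos (by linarith) (by linarith)
  have h1pos : 0 < ((m:ℝ)+2) ^ (-p) := Real.rpow_pos_of_pos (by linarith) _
  have h2pos : 0 < ((m:ℝ)+1) ^ (-p) := Real.rpow_pos_of_pos (by linarith) _
  have hrk'pos : 0 < rk' := by rw [hrk'2]; positivity
  have hRk'pos : 0 < Rk' := by rw [hRk'2]; positivity
  have hrk'le : rk' ≤ Q := by
    rw [hrk'2]; exact mul_le_of_le_one_right hQ.le h1le
  have hRk'le : Rk' ≤ Q := by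
    rw [hRk'2]; exact mul_le_of_le_one_right hQ.le h2le
  -- bounds on a and b
  have ha_bound : |a| ≤ 2 * Q / (Rk - rk) := by
    rw [ha, abs_div, abs_of_pos hsubpos]
    have h : |Rk' - rk'| ≤ 2 * Q := abs_le.mpr ⟨by linarith, by linarith⟩
    gcongr
  have hb_bound : |b| ≤ 2 * Q * Rk / (Rk - rk) := by
    rw [hb, abs_div, abs_of_pos hsubpos]
    have h : |Rk * rk' - Rk' * rk| ≤ 2 * Q * Rk := by
      have e1 : Rk * rk' ≤ Rk * Q := mul_le_mul_of_nonneg_left hrk'le hRkpos.le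
      have e2 : Rk' * rk ≤ Q * Rk := mul_le_mul hRk'le hrkRk hrkpos.le hQ.le
      have e3 : 0 ≤ Rk * rk' := by positivity
      have e4 : 0 ≤ Rk' * rk := by positivity
      exact abs_le.mpr ⟨by linarith, by linarith⟩
    gcongr
  set K := |a| + 2 * |b| / rk with hKdef
  have hK0 : 0 ≤ K := by positivity
  -- Lipschitz bound
  have hxpos : 0 < ‖x‖ := lt_of_lt_of_le hrkpos hx1
  have hypos : 0 < ‖y‖ := lt_of_lt_of_le hrkpos hy1
  have hx0 : x ≠ 0 := norm_pos_iff.mp hxpos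
  have hy0 : y ≠ 0 := norm_pos_iff.mp hypos
  have hsx : ((a * ‖x‖ + b) / ‖x‖) • x = a • x + b • (‖x‖⁻¹ • x) := by
    have h : (a * ‖x‖ + b) / ‖x‖ = a + b * ‖x‖⁻¹ := by field_simp
    rw [h, add_smul, mul_smul]
  have hsy : ((a * ‖y‖ + b) / ‖y‖) • y = a • y + b • (‖y‖⁻¹ • y) := by
    have h : (a * ‖y‖ + b) / ‖y‖ = a + b * ‖y‖⁻¹ := by field_simp
    rw [h, add_smul, mul_smul]
  have hdiff : ((a * ‖x‖ + b) / ‖x‖) • x - ((a * ‖y‖ + b) / ‖y‖) • y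
      = a • (x - y) + b • (‖x‖⁻¹ • x - ‖y‖⁻¹ • y) := by
    rw [hsx, hsy, smul_sub, smul_sub]; abel
  have hlip : ‖((a * ‖x‖ + b) / ‖x‖) • x - ((a * ‖y‖ + b) / ‖y‖) • y‖
      ≤ K * ‖x - y‖ := by
    rw [hdiff]
    have hv : ‖‖x‖⁻¹ • x - ‖y‖⁻¹ • y‖ ≤ 2 * ‖x - y‖ / rk := by
      calc ‖‖x‖⁻¹ • x - ‖y‖⁻¹ • y‖ ≤ 2 * ‖x - y‖ / ‖x‖ := unit_vec_lip x y hx0 hy0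
        _ ≤ 2 * ‖x - y‖ / rk := by gcongr
    calc ‖a • (x - y) + b • (‖x‖⁻¹ • x - ‖y‖⁻¹ • y)‖
        ≤ ‖a • (x - y)‖ + ‖b • (‖x‖⁻¹ • x - ‖y‖⁻¹ • y)‖ := norm_add_le _ _
      _ = |a| * ‖x - y‖ + |b| * ‖‖x‖⁻¹ • x - ‖y‖⁻¹ • y‖ := by
          rw [norm_smul, norm_smul, Real.norm_eq_abs, Real.norm_eq_abs]
      _ ≤ |a| * ‖x - y‖ + |b| * (2 * ‖x - y‖ / rk) := by gcongr
      _ = K * ‖x - y‖ := by rw [hKdef]; field_simp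
  -- key constant bound
  have hKbound : K * (2*σ) ^ (m+1) ≤ C := by
    have e1 : |a| ≤ 8 * Q / (P * (1 - 2*σ)) := by
      calc |a| ≤ 2 * Q / (Rk - rk) := ha_bound
        _ = 8 * Q / (P * (1 - 2*σ)) := by
            rw [hsub, div_div_eq_mul_div]; ring
    have e2 : 2 * |b| / rk ≤ 8 * Q / (P * (1 - 2*σ) * σ) := by
      have h1 : |b| ≤ 2 * Q / (1 - 2*σ) := by
        calc |b| ≤ 2 * Q * Rk / (Rk - rk) := hb_bound
          _ = 2 * Q / (1 - 2*σ) := by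
              rw [hsub, hRk2]
              rw [div_eq_div_iff (by positivity) (by positivity)]
              ring
      calc 2 * |b| / rk ≤ 2 * (2 * Q / (1 - 2*σ)) / rk := by gcongr
        _ = 8 * Q / (P * (1 - 2*σ) * σ) := by
            rw [hrk2, div_eq_div_iff (by positivity) (by positivity)]
            field_simp
            all_goals ring
    have e3 : 8 * Q / (P * (1 - 2*σ)) ≤ 8 * Q / (P * (1 - 2*σ) * σ) := by
      have hXle : P * (1 - 2*σ) * σ ≤ P * (1 - 2*σ) := by
        have := mul_le_of_le_one_right (by positivity : (0:ℝ) ≤ P * (1 - 2*σ)) hσ1.le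
        linarith
      gcongr
    have eK : K ≤ 16 * Q / (P * (1 - 2*σ) * σ) := by
      rw [hKdef]
      calc |a| + 2 * |b| / rk ≤ 8 * Q / (P * (1 - 2*σ) * σ) + 8 * Q / (P * (1 - 2*σ) * σ) :=
            add_le_add (le_trans e1 e3) e2
        _ = 16 * Q / (P * (1 - 2*σ) * σ) := by ring
    calc K * (2*σ) ^ (m+1) ≤ (16 * Q / (P * (1 - 2*σ) * σ)) * (2*σ) ^ (m+1) :=
          mul_le_mul_of_nonneg_right eK (by positivity)
      _ = C := by
          rw [hQdef, hPdef, hCdef, mul_pow]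
          have hσne : σ ≠ 0 := hσ0.ne'
          have h2σne : (1 - 2*σ) ≠ 0 := h2σ.ne'
          field_simp
          ring
  -- Hölder step
  rcases (norm_nonneg (x - y)).eq_or_lt' with h0 | ht0
  · have hxy : x = y := by
      rw [← sub_eq_zero]; exact norm_eq_zero.mp h0
    subst hxy
    simp [sub_self, Real.zero_rpow hβpos.ne']
  · set t := ‖x - y‖ with htdef
    have htP : t ≤ P := by
      have h1 : t ≤ ‖x‖ + ‖y‖ := norm_sub_le x y
      have h2 : Rk = P / 4 := hRk2
      linarith
    have keyP : P ^ ((1:ℝ)-β) = (2*σ) ^ (m+1) := by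
      rw [hPdef, ← Real.rpow_natCast σ (m+1), ← Real.rpow_mul hσ0.le]
      rw [show (((m+1:ℕ):ℝ)) * (1-β) = ((m+1:ℕ):ℝ) - β * ((m+1:ℕ):ℝ) by ring]
      rw [Real.rpow_sub hσ0, Real.rpow_mul hσ0.le, hσβ, Real.rpow_natCast,
        Real.rpow_natCast]
      rw [div_eq_iff (by positivity), ← mul_pow,
        show (2*σ*(1/2:ℝ)) = σ from by ring]
    have htpow : t ^ ((1:ℝ)-β) ≤ P ^ ((1:ℝ)-β) :=
      Real.rpow_le_rpow ht0.le htP (by linarith)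
    calc ‖((a * ‖x‖ + b) / ‖x‖) • x - ((a * ‖y‖ + b) / ‖y‖) • y‖
        ≤ K * t := hlip
      _ = K * (t ^ ((1:ℝ)-β) * t ^ β) := by
          rw [← Real.rpow_add ht0, show (1:ℝ)-β+β = 1 by ring, Real.rpow_one]
      _ = K * t ^ ((1:ℝ)-β) * t ^ β := (mul_assoc K _ _).symm
      _ ≤ K * P ^ ((1:ℝ)-β) * t ^ β := by
          gcongr
      _ = K * (2*σ) ^ (m+1) * t ^ β := by rw [keyP]
      _ ≤ C * t ^ β := by
          have := Real.rpow_nonneg ht0.le β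
          exact mul_le_mul_of_nonneg_right hKbound this
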